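/- If the set 𝐌 of binary measurement operators spans the space of Hermitian operators over the reals (informational completeness), then the associated seminorm ‖Δ‖_M = sup_{M∈𝐌}(2 tr(MΔ) − tr Δ) is a norm on the space of Hermitian operators; i.e., ‖Δ‖_M = 0 implies Δ = 0. -/

import Mathlib

open Matrix
open scoped ComplexOrder

namespace QSVQDH

variable {d : ℕ}

/-- Schatten 1-norm (trace norm). -/
noncomputable def trNorm (A : Matrix (Fin d) (Fin d) ℂ) : ℝ :=
  ((Matrix.posSemidef_conjTranspose_mul_self A).isHermitian.eigenvectorUnitary.1 *
    diagonal ((fun x : ℝ => (x : ℂ)) ∘ (Real.sqrt ·) ∘ (Matrix.posSemidef_conjTranspose_mul_self A).isHermitian.eigenvalues) *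
    (star (Matrix.posSemidef_conjTranspose_mul_self A).isHermitian.eigenvectorUnitary :
      Matrix (Fin d) (Fin d) ℂ)).trace.re

/-- Schatten 2-norm (Hilbert–Schmidt norm). -/
noncomputable def hsNorm (A : Matrix (Fin d) (Fin d) ℂ) : ℝ :=
  Real.sqrt ((Aᴴ * A).trace.re)

/-- Operator norm. -/
noncomputable def opNorm (A : Matrix (Fin d) (Fin d) ℂ) : ℝ :=
  ‖Matrix.toEuclideanCLM (𝕜 := ℂ) A‖

/-- Density operator: positive semidefinite with unit trace. -/
def IsDensity (ρ : Matrix (Fin d) (Fin d) ℂ) : Prop := ρ.PosSemidef ∧ ρ.trace = 1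

/-- POVM element: 0 ≤ M ≤ I. -/
def IsPOVMElem (M : Matrix (Fin d) (Fin d) ℂ) : Prop := M.PosSemidef ∧ (1 - M).PosSemidef

/-- A measurement class of binary effects: contains 0, consists of POVM elements,
is convex, and is closed under M ↦ I − M. -/
def IsMClass (Mset : Set (Matrix (Fin d) (Fin d) ℂ)) : Prop :=
  0 ∈ Mset ∧ (∀ M ∈ Mset, IsPOVMElem M) ∧ Convex ℝ Mset ∧ (∀ M ∈ Mset, 1 - M ∈ Mset)

/-- The M-seminorm ‖Δ‖_M = sup_{M ∈ Mset} (2 tr(MΔ) − tr Δ). -/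
noncomputable def Mnorm (Mset : Set (Matrix (Fin d) (Fin d) ℂ))
    (Δ : Matrix (Fin d) (Fin d) ℂ) : ℝ :=
  sSup ((fun M => 2 * (M * Δ).trace.re - Δ.trace.re) '' Mset)

/-- The ε-distinguishability ratio μ_{ρ,M}(ε). -/
noncomputable def mu (Mset : Set (Matrix (Fin d) (Fin d) ℂ))
    (ρ : Matrix (Fin d) (Fin d) ℂ) (ε : ℝ) : ℝ :=
  (1 / (2 * ε)) *
    sInf ((fun σ => Mnorm Mset (ρ - σ)) '' {σ | IsDensity σ ∧ 2 * ε ≤ trNorm (ρ - σ)})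

/-- The ε-visibility γ_{V,M}(ε), where the subspace V is given by its
orthogonal projector P. -/
noncomputable def gamma (Mset : Set (Matrix (Fin d) (Fin d) ℂ))
    (P : Matrix (Fin d) (Fin d) ℂ) (ε : ℝ) : ℝ :=
  (1 / ε) * sSup ((fun Ω =>
      sInf ((fun p : Matrix (Fin d) (Fin d) ℂ × Matrix (Fin d) (Fin d) ℂ =>
          (Ω * (p.1 - p.2)).trace.re) ''
        {p | IsDensity p.1 ∧ P * p.1 = p.1 ∧ IsDensity p.2 ∧ (p.2 * P).trace.re ≤ 1 - ε}))
    '' Mset)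

/-- The ε-visibility in its minimax (minimum) form. -/
noncomputable def gammaMin (Mset : Set (Matrix (Fin d) (Fin d) ℂ))
    (P : Matrix (Fin d) (Fin d) ℂ) (ε : ℝ) : ℝ :=
  sInf ((fun p : Matrix (Fin d) (Fin d) ℂ × Matrix (Fin d) (Fin d) ℂ =>
      (1 / (2 * ε)) * Mnorm Mset (p.1 - p.2)) ''
    {p | IsDensity p.1 ∧ P * p.1 = p.1 ∧ IsDensity p.2 ∧ (p.2 * P).trace.re ≤ 1 - ε})

/-- μ_{ρ,M}(1), defined through perfectly distinguishable (orthogonal) counterparts. -/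
noncomputable def muone (Mset : Set (Matrix (Fin d) (Fin d) ℂ))
    (ρ : Matrix (Fin d) (Fin d) ℂ) : ℝ :=
  (1 / 2) * sInf ((fun σ => Mnorm Mset (ρ - σ)) '' {σ | IsDensity σ ∧ (ρ * σ).trace = 0})

/-- The distinguishability ratio μ̂_{ρ,M}. -/
noncomputable def muhat (Mset : Set (Matrix (Fin d) (Fin d) ℂ))
    (ρ : Matrix (Fin d) (Fin d) ℂ) : ℝ :=
  sInf ((fun σ => Mnorm Mset (ρ - σ) / trNorm (ρ - σ)) '' {σ | IsDensity σ ∧ σ ≠ ρ})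

lemma single_quad (A : Matrix (Fin d) (Fin d) ℂ) (i : Fin d) :
    star (Pi.single i 1) ⬝ᵥ A *ᵥ Pi.single i 1 = A i i := by
  simp [dotProduct, mulVec, Pi.single_apply]

lemma diag_mem (M : Matrix (Fin d) (Fin d) ℂ) (h1 : M.PosSemidef)
    (h2 : (1 - M).PosSemidef) (i : Fin d) : 0 ≤ (M i i).re ∧ (M i i).re ≤ 1 := by
  have a := h1.dotProduct_mulVec_nonneg (Pi.single i 1)
  have b := h2.dotProduct_mulVec_nonneg (Pi.single i 1)
  rw [single_quad] at a b
  rw [Complex.le_def] at a b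
  simp at a b
  exact ⟨a.1, b.1⟩

lemma entry_le_one (M : Matrix (Fin d) (Fin d) ℂ) (h1 : M.PosSemidef)
    (h2 : (1 - M).PosSemidef) (i j : Fin d) : ‖M i j‖ ≤ 1 := by
  obtain ⟨B, hB⟩ : ∃ B : Matrix (Fin d) (Fin d) ℂ, M = Bᴴ * B := by
    open scoped MatrixOrder Matrix.Norms.L2Operator in
    obtain ⟨B, hB⟩ := CStarAlgebra.nonneg_iff_eq_star_mul_self.mp h1.nonneg
    exact ⟨B, hB⟩
  set x : EuclideanSpace ℂ (Fin d) := WithLp.toLp 2 (fun k => B k i) with hx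
  set y : EuclideanSpace ℂ (Fin d) := WithLp.toLp 2 (fun k => B k j) with hy
  have hinner : (inner ℂ x y : ℂ) = M i j := by
    simp [hB, PiLp.inner_apply, Matrix.mul_apply, conjTranspose_apply, RCLike.inner_apply, hx, hy, mul_comm]
  have hnorm : ∀ (a : Fin d) (z : EuclideanSpace ℂ (Fin d)),
      (∀ k, z k = B k a) → ‖z‖ ≤ 1 := by
    intro a z hz
    have hdiag : (M a a).re = ∑ k, ‖B k a‖ ^ 2 := by
      simp only [hB, Matrix.mul_apply, conjTranspose_apply, Complex.re_sum]
      congr 1; funext k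
      rw [show star (B k a) * B k a = (Complex.normSq (B k a) : ℂ) by
        rw [mul_comm]; exact Complex.mul_conj _]
      simp [Complex.normSq_eq_norm_sq, sq]
    rw [EuclideanSpace.norm_eq]
    have h1' := (diag_mem M h1 h2 a).2
    rw [hdiag] at h1'
    calc Real.sqrt (∑ k, ‖z k‖ ^ 2) ≤ Real.sqrt 1 := by
          apply Real.sqrt_le_sqrt
          rw [show (∑ k, ‖z k‖ ^ 2) = ∑ k, ‖B k a‖^2 by congr 1; funext k; rw [hz]]
          exact h1'
      _ = 1 := Real.sqrt_one
  calc ‖M i j‖ = ‖(inner ℂ x y : ℂ)‖ := by rw [hinner]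
    _ ≤ ‖x‖ * ‖y‖ := norm_inner_le_norm x y
    _ ≤ 1 * 1 :=
        mul_le_mul (hnorm i x fun k => rfl) (hnorm j y fun k => rfl) (norm_nonneg _) zero_le_one
    _ = 1 := by ring

/-- if Mset spans the Hermitian operators over ℝ (informational completeness),
then the M-seminorm is a norm on Hermitian operators: ‖Δ‖_M = 0 implies Δ = 0. -/
theorem Mnorm_norm_of_informationallyComplete (Mset : Set (Matrix (Fin d) (Fin d) ℂ))
    (hM : IsMClass Mset)
    (hspan : ∀ A : Matrix (Fin d) (Fin d) ℂ, A.IsHermitian → A ∈ Submodule.span ℝ Mset) :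
    ∀ Δ : Matrix (Fin d) (Fin d) ℂ, Δ.IsHermitian → Mnorm Mset Δ = 0 → Δ = 0 := by
  intro Δ hΔ h0
  obtain ⟨h0mem, hPOVM, hconv, hcompl⟩ := hM
  rw [Mnorm] at h0
  set C : ℝ := ∑ i, ∑ k, ‖Δ k i‖ with hC
  have htrbound : ∀ M ∈ Mset, ((M * Δ).trace).re ≤ C := by
    intro M hMm
    obtain ⟨hp1, hp2⟩ := hPOVM M hMm  -- IsPOVMElem
    calc ((M * Δ).trace).re ≤ ‖(M * Δ).trace‖ := Complex.re_le_norm _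
      _ = ‖∑ i, ∑ k, M i k * Δ k i‖ := by
          simp [Matrix.trace, Matrix.diag, Matrix.mul_apply]
      _ ≤ ∑ i, ∑ k, ‖M i k * Δ k i‖ := by
          refine (norm_sum_le _ _).trans (Finset.sum_le_sum fun i _ => norm_sum_le _ _)
      _ ≤ ∑ i, ∑ k, ‖Δ k i‖ := by
          refine Finset.sum_le_sum fun i _ => Finset.sum_le_sum fun k _ => ?_
          rw [norm_mul]
          calc ‖M i k‖ * ‖Δ k i‖ ≤ 1 * ‖Δ k i‖ :=
                mul_le_mul_of_nonneg_right (entry_le_one M hp1 hp2 i k) (norm_nonneg _)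
            _ = ‖Δ k i‖ := one_mul _
  have hbdd : BddAbove ((fun M => 2 * (M * Δ).trace.re - Δ.trace.re) '' Mset) := by
    refine ⟨2 * C - Δ.trace.re, ?_⟩
    rintro r ⟨M, hMm, rfl⟩
    have := htrbound M hMm
    simp only []
    linarith
  have key : ∀ M ∈ Mset, 2 * (M * Δ).trace.re - Δ.trace.re ≤ 0 := by
    intro M hMm; rw [← h0]; exact le_csSup hbdd ⟨M, hMm, rfl⟩
  have k0 := key 0 h0mem
  have k1 := key 1 (by simpa using hcompl 0 h0mem)
  simp at k0 k1
  have htr0 : Δ.trace.re = 0 := le_antisymm (by linarith) k0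
  have hzero : ∀ M ∈ Mset, ((M * Δ).trace).re = 0 := by
    intro M hMm
    have h1' := key M hMm
    have h2' := key (1 - M) (hcompl M hMm)
    rw [sub_mul, one_mul, Matrix.trace_sub, Complex.sub_re] at h2'
    rw [htr0] at h1' h2'
    linarith
  let φ : Matrix (Fin d) (Fin d) ℂ →ₗ[ℝ] ℝ :=
  { toFun := fun A => ((A * Δ).trace).re
    map_add' := by intro A B; simp [add_mul]
    map_smul' := by intro c A; simp [smul_mul_assoc] }
  have hker : Submodule.span ℝ Mset ≤ LinearMap.ker φ :=
    Submodule.span_le.mpr fun M hMm => LinearMap.mem_ker.mpr (hzero M hMm)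
  have hφΔ : ((Δ * Δ).trace).re = 0 := hker (hspan Δ hΔ)
  have hsum : (∑ j, ∑ k, ‖Δ k j‖ ^ 2 : ℝ) = 0 := by
    rw [← hφΔ]
    conv_lhs => rw [show Δ = Δᴴ from hΔ.symm]
    simp only [Matrix.trace, Matrix.diag, Matrix.mul_apply, Matrix.conjTranspose_apply,
      Complex.re_sum]
    congr 1; funext j; congr 1; funext k
    have he : Δ k j = star (Δ j k) := by
      conv_lhs => rw [← hΔ]
      rfl
    rw [he]
    simp [Complex.mul_conj', Complex.mul_conj, Complex.normSq_eq_norm_sq, sq]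
  ext j k
  have hnn : ∀ j ∈ Finset.univ, (0:ℝ) ≤ ∑ k, ‖Δ k j‖ ^ 2 :=
    fun j _ => Finset.sum_nonneg fun k _ => sq_nonneg _
  have h1 := (Finset.sum_eq_zero_iff_of_nonneg hnn).mp hsum k (Finset.mem_univ _)
  have h2 := (Finset.sum_eq_zero_iff_of_nonneg (fun i _ => sq_nonneg ‖Δ i k‖)).mp h1 j
    (Finset.mem_univ _)
  simpa using pow_eq_zero_iff (n := 2) (by norm_num) |>.mp h2

end QSVQDH
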